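/- arXiv:1307.0343 — 2 statements merged into one kernel-verified Lean document; each statement's English description precedes it below -/
import Mathlib

section
/- Let f : (0,∞) → ℝ be measurable and let f̃ denote its Laplace transform, f̃(z) = ∫_0^∞ f(t) e^{−zt} dt. Suppose there exist positive reals δ and ε such that: (1) f̃ extends to a function analytic on {z = x + iy : |x| < δ + ε} ∖ {0}; (2) f̃ has a simple pole at 0 with residue C, i.e. z ↦ f̃(z) − C/z extends analytically across 0; (3) ∫_{−∞}^∞ |f̃(δ + iy)| dy < ∞; (4) f̃(x + iy) → 0 as y → ±∞, uniformly in x ∈ [−δ, δ]; (5) ψ := ∫_{−∞}^∞ |f̃(−δ + iy)| dy < ∞; and (6) the Laplace inversion formula holds: for every t > 0, f(t) = (1/(2πi)) lim_{β→∞} ∫_{δ−iβ}^{δ+iβ} f̃(z) e^{zt} dz. Then for all t > 0, |f(t) − C| ≤ (ψ/(2π)) e^{−δt}. -/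
open MeasureTheory Filter Complex

noncomputable section

open Set intervalIntegral

lemma inv_decomp (u v : ℝ) : ((u:ℂ) + v*I)⁻¹
    = ((u/(u^2+v^2) : ℝ) : ℂ) - ((v/(u^2+v^2) : ℝ) : ℂ)*I := by
  by_cases h : u = 0 ∧ v = 0
  · obtain ⟨rfl, rfl⟩ := h; simp
  · have h2 : (0:ℝ) < u^2+v^2 := by
      rcases not_and_or.mp h with h | h <;> positivity
    have h3 : ((u^2+v^2 : ℝ) : ℂ) ≠ 0 := by
      exact_mod_cast h2.ne'
    apply inv_eq_of_mul_eq_one_right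
    push_cast at h3 ⊢
    field_simp
    ring_nf
    simp [Complex.I_sq]

lemma aux_cont (b : ℝ) (hb : b ≠ 0) :
    Continuous fun x : ℝ => ((x : ℂ) + b * I)⁻¹ := by
  apply Continuous.inv₀
  · exact (Complex.continuous_ofReal).add continuous_const
  · intro x
    intro h
    have := congrArg Complex.im h
    simp at this
    exact hb this

lemma aux_horiz (a b : ℝ) (hb : b ≠ 0) :
    ∫ x in -a..a, ((x : ℂ) + b * I)⁻¹ = -((2 * Real.arctan (a / b) : ℝ) : ℂ) * I := by
  have key : ∀ x : ℝ, HasDerivAt (fun x : ℝ =>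
      (((1:ℝ)/2 * Real.log (x^2 + b^2) : ℝ) : ℂ) - ((Real.arctan (x / b) : ℝ) : ℂ) * I)
      (((x : ℂ) + b * I)⁻¹) x := by
    intro x
    have hx2 : x^2 + b^2 ≠ 0 := by positivity
    have h1 : HasDerivAt (fun x : ℝ => (1:ℝ)/2 * Real.log (x^2 + b^2))
        (x / (x^2 + b^2)) x := by
      have hp : HasDerivAt (fun x : ℝ => x^2 + b^2) (2 * x) x := by
        simpa using ((hasDerivAt_pow 2 x).add_const (b^2))
      have := (Real.hasDerivAt_log hx2).comp x hp
      refine (this.const_mul ((1:ℝ)/2)).congr_deriv ?_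
      field_simp
    have h2 : HasDerivAt (fun x : ℝ => Real.arctan (x / b))
        (b / (x^2 + b^2)) x := by
      have hd : HasDerivAt (fun x : ℝ => x / b) (1 / b) x := (hasDerivAt_id x).div_const b
      have := (Real.hasDerivAt_arctan (x / b)).comp x hd
      refine this.congr_deriv ?_
      rw [div_pow]
      field_simp
      ring
    have h3 := h1.ofReal_comp.sub ((h2.ofReal_comp).mul_const I)
    refine h3.congr_deriv ?_
    rw [inv_decomp]
  rw [intervalIntegral.integral_eq_sub_of_hasDerivAt (fun x _ => key x)
    ((aux_cont b hb).intervalIntegrable _ _)]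
  have harctan : Real.arctan (-a / b) = - Real.arctan (a / b) := by
    rw [neg_div, Real.arctan_neg]
  have e1 : (-a)^2 + b^2 = a^2 + b^2 := by ring
  simp only [e1, harctan]
  push_cast
  ring

lemma aux_vert (a b : ℝ) (ha : a ≠ 0) :
    ∫ y in -b..b, ((a : ℂ) + y * I)⁻¹ = ((2 * Real.arctan (b / a) : ℝ) : ℂ) := by
  have key : ∀ y : ℝ, HasDerivAt (fun y : ℝ =>
      ((Real.arctan (y / a) : ℝ) : ℂ) + (-((1:ℝ)/2 * Real.log (a^2 + y^2)) : ℝ) * I)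
      (((a : ℂ) + y * I)⁻¹) y := by
    intro y
    have hx2 : a^2 + y^2 ≠ 0 := by positivity
    have h1 : HasDerivAt (fun y : ℝ => -((1:ℝ)/2 * Real.log (a^2 + y^2)))
        (-(y / (a^2 + y^2))) y := by
      have hp : HasDerivAt (fun y : ℝ => a^2 + y^2) (2 * y) y := by
        simpa using ((hasDerivAt_pow 2 y).const_add (a^2))
      have := ((Real.hasDerivAt_log hx2).comp y hp).const_mul ((1:ℝ)/2)
      refine this.neg.congr_deriv ?_
      field_simp
    have h2 : HasDerivAt (fun y : ℝ => Real.arctan (y / a))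
        (a / (a^2 + y^2)) y := by
      have hd : HasDerivAt (fun y : ℝ => y / a) (1 / a) y := (hasDerivAt_id y).div_const a
      have := (Real.hasDerivAt_arctan (y / a)).comp y hd
      refine this.congr_deriv ?_
      rw [div_pow]
      field_simp
    have h3 := h2.ofReal_comp.add ((h1.ofReal_comp).mul_const I)
    refine h3.congr_deriv ?_
    rw [inv_decomp]
    push_cast
    ring
  have hcont : Continuous fun y : ℝ => ((a : ℂ) + y * I)⁻¹ := by
    apply Continuous.inv₀
    · exact continuous_const.add (Complex.continuous_ofReal.mul continuous_const)
    · intro y h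
      have := congrArg Complex.re h
      simp at this
      exact ha this
  rw [intervalIntegral.integral_eq_sub_of_hasDerivAt (fun y _ => key y)
    (hcont.intervalIntegrable _ _)]
  have harctan : Real.arctan (-b / a) = - Real.arctan (b / a) := by
    rw [neg_div, Real.arctan_neg]
  have e1 : a^2 + (-b)^2 = a^2 + b^2 := by ring
  simp only [e1, harctan]
  push_cast
  ring

lemma aux_cont_v (a : ℝ) (ha : a ≠ 0) :
    Continuous fun y : ℝ => ((a : ℂ) + y * I)⁻¹ := by
  apply Continuous.inv₀
  · exact continuous_const.add (Complex.continuous_ofReal.mul continuous_const)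
  · intro y h
    have := congrArg Complex.re h
    simp at this
    exact ha this

lemma dslope_diff (t : ℝ) (z : ℂ) :
    DifferentiableAt ℂ (dslope (fun w : ℂ => Complex.exp (w * t)) 0) z := by
  rcases eq_or_ne z 0 with rfl | hz
  · have ha : AnalyticAt ℂ (fun w : ℂ => Complex.exp (w * t)) 0 := by
      apply AnalyticAt.cexp
      exact (analyticAt_id.mul analyticAt_const)
    obtain ⟨p, hp⟩ := ha
    exact (hp.has_fpower_series_dslope_fslope).analyticAt.differentiableAt
  · rw [differentiableAt_dslope_of_ne hz]
    exact ((differentiableAt_id.mul (differentiableAt_const _)).cexp)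

lemma rect_inv (δ β : ℝ) (hδ : 0 < δ) (hβ : 0 < β) :
    (∫ x in -δ..δ, ((x:ℂ) + (-β:ℝ) * I)⁻¹) - (∫ x in -δ..δ, ((x:ℂ) + (β:ℝ) * I)⁻¹)
      + I • (∫ y in -β..β, (((δ:ℝ):ℂ) + y * I)⁻¹)
      - I • (∫ y in -β..β, (((-δ:ℝ):ℂ) + y * I)⁻¹)
    = 2 * Real.pi * I := by
  rw [aux_horiz δ (-β) (by linarith), aux_horiz δ β (by linarith),
    aux_vert δ β (by linarith), aux_vert (-δ) β (by linarith)]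
  have h1 : Real.arctan (δ / -β) = - Real.arctan (δ / β) := by
    rw [div_neg, Real.arctan_neg]
  have h2 : Real.arctan (β / -δ) = - Real.arctan (β / δ) := by
    rw [div_neg, Real.arctan_neg]
  have h3 : Real.arctan (β / δ) = Real.pi / 2 - Real.arctan (δ / β) := by
    rw [show β / δ = (δ / β)⁻¹ by rw [inv_div], Real.arctan_inv_of_pos (by positivity)]
  rw [h1, h2, h3]
  push_cast
  rw [smul_eq_mul, smul_eq_mul]
  ring

lemma key_rect (F g : ℂ → ℂ) (C : ℝ) (δ ε : ℝ) (hδ : 0 < δ) (hε : 0 < ε)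
    (hg : AnalyticOnNhd ℂ g {z : ℂ | |z.re| < δ + ε})
    (hFg : ∀ z ∈ ({z : ℂ | |z.re| < δ + ε} \ {0} : Set ℂ), F z = (C : ℂ) / z + g z)
    (t β : ℝ) (hβ : 0 < β) :
    (∫ x in -δ..δ, F (x + ((-β : ℝ):ℂ) * I) * Complex.exp ((x + ((-β:ℝ):ℂ) * I) * t))
      - (∫ x in -δ..δ, F (x + ((β:ℝ):ℂ) * I) * Complex.exp ((x + ((β:ℝ):ℂ) * I) * t))
      + I • (∫ y in -β..β, F (((δ:ℝ):ℂ) + y * I) * Complex.exp ((((δ:ℝ):ℂ) + y * I) * t))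
      - I • (∫ y in -β..β, F (((-δ:ℝ):ℂ) + y * I) * Complex.exp ((((-δ:ℝ):ℂ) + y * I) * t))
    = 2 * Real.pi * I * C := by
  set H : ℂ → ℂ := fun z => (C:ℂ) * dslope (fun w : ℂ => Complex.exp (w * t)) 0 z
    + g z * Complex.exp (z * t) with hH
  have hHd : ∀ z : ℂ, |z.re| < δ + ε → DifferentiableAt ℂ H z := by
    intro z hz
    apply DifferentiableAt.add
    · exact (differentiableAt_const _).mul (dslope_diff t z)
    · exact ((hg z hz).differentiableAt).mul
        ((differentiableAt_id.mul (differentiableAt_const _)).cexp)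
  -- pointwise identity off 0
  have hpt : ∀ z : ℂ, z ≠ 0 → |z.re| < δ + ε →
      F z * Complex.exp (z * t) = (C:ℂ) * z⁻¹ + H z := by
    intro z hz0 hz
    rw [hFg z ⟨hz, hz0⟩, hH]
    simp only
    rw [dslope_of_ne _ hz0, slope_def_field]
    simp only [zero_mul, Complex.exp_zero, sub_zero]
    field_simp
    ring
  -- rectangle theorem for H
  have hsub : (Set.uIcc (-δ:ℝ) δ ×ℂ Set.uIcc (-β:ℝ) β : Set ℂ) ⊆ {z : ℂ | |z.re| < δ + ε} := by
    intro z hz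
    rw [Complex.mem_reProdIm] at hz
    have h1 := hz.1
    rw [Set.uIcc_of_le (by linarith : (-δ:ℝ) ≤ δ)] at h1
    simp only [Set.mem_setOf_eq]
    calc |z.re| ≤ δ := abs_le.mpr ⟨h1.1, h1.2⟩
      _ < δ + ε := by linarith
  have hrect := Complex.integral_boundary_rect_eq_zero_of_differentiableOn H
    (-(δ:ℂ) - β * I) ((δ:ℂ) + β * I)
    (by
      apply DifferentiableOn.mono (t := {z : ℂ | |z.re| < δ + ε})
      · exact fun z hz => (hHd z hz).differentiableWithinAt
      · convert hsub using 2 <;> simp)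
  simp only [sub_re, neg_re, ofReal_re, mul_re, I_re, mul_zero, ofReal_im, I_im,
    mul_one, sub_im, neg_im, add_re, add_im, zero_sub, zero_add, sub_zero, mul_im,
    zero_mul, add_zero, neg_neg, neg_zero] at hrect
  have seg_h : ∀ b : ℝ, b ≠ 0 →
      (∫ x in -δ..δ, F ((x:ℂ) + ((b:ℝ):ℂ) * I) * Complex.exp (((x:ℂ) + ((b:ℝ):ℂ) * I) * t))
        = (C:ℂ) * (∫ x in -δ..δ, ((x:ℂ) + ((b:ℝ):ℂ) * I)⁻¹)
          + ∫ x in -δ..δ, H ((x:ℂ) + ((b:ℝ):ℂ) * I) := by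
    intro b hb
    have hint1 : IntervalIntegrable (fun x : ℝ => (C:ℂ) * ((x:ℂ) + ((b:ℝ):ℂ) * I)⁻¹)
        volume (-δ) δ := (continuous_const.mul (aux_cont b hb)).intervalIntegrable _ _
    have hint2 : IntervalIntegrable (fun x : ℝ => H ((x:ℂ) + ((b:ℝ):ℂ) * I))
        volume (-δ) δ := by
      apply ContinuousOn.intervalIntegrable
      intro x hx
      rw [Set.uIcc_of_le (by linarith : (-δ:ℝ) ≤ δ)] at hx
      have hre : |((x:ℂ) + ((b:ℝ):ℂ) * I).re| < δ + ε := by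
        simp only [add_re, ofReal_re, mul_re, I_re, mul_zero, ofReal_im, I_im, mul_one,
          zero_sub, add_zero, sub_zero, zero_mul, neg_zero]
        have : |x| ≤ δ := abs_le.mpr ⟨hx.1, hx.2⟩
        first
        | (calc |(x:ℝ) + -0| = |x| := by norm_num
            _ < δ + ε := by linarith)
        | linarith
      have hc : Continuous (fun x : ℝ => (x:ℂ) + ((b:ℝ):ℂ) * I) :=
        Complex.continuous_ofReal.add continuous_const
      have : ContinuousAt (H ∘ fun x : ℝ => (x:ℂ) + ((b:ℝ):ℂ) * I) x :=
        ContinuousAt.comp (f := fun x : ℝ => (x:ℂ) + ((b:ℝ):ℂ) * I) (x := x)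
          (hHd _ hre).continuousAt hc.continuousAt
      exact this.continuousWithinAt
    rw [← intervalIntegral.integral_const_mul, ← intervalIntegral.integral_add hint1 hint2]
    apply intervalIntegral.integral_congr
    intro x hx
    rw [Set.uIcc_of_le (by linarith : (-δ:ℝ) ≤ δ)] at hx
    have hxd : |x| ≤ δ := abs_le.mpr ⟨hx.1, hx.2⟩
    apply hpt
    · intro h
      have := congrArg Complex.im h
      simp at this
      exact hb this
    · simp only [add_re, ofReal_re, mul_re, I_re, mul_zero, ofReal_im, I_im, mul_one,
        zero_sub, add_zero, sub_zero, zero_mul, neg_zero]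
      first
      | (calc |(x:ℝ) + -0| = |x| := by norm_num
          _ < δ + ε := by linarith)
      | linarith
  have seg_v : ∀ a : ℝ, a ≠ 0 → |a| ≤ δ →
      (∫ y in -β..β, F (((a:ℝ):ℂ) + (y:ℂ) * I) * Complex.exp ((((a:ℝ):ℂ) + (y:ℂ) * I) * t))
        = (C:ℂ) * (∫ y in -β..β, (((a:ℝ):ℂ) + (y:ℂ) * I)⁻¹)
          + ∫ y in -β..β, H (((a:ℝ):ℂ) + (y:ℂ) * I) := by
    intro a ha had
    have hre : ∀ y : ℝ, |(((a:ℝ):ℂ) + (y:ℂ) * I).re| < δ + ε := by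
      intro y
      simp only [add_re, ofReal_re, mul_re, I_re, mul_zero, ofReal_im, I_im, mul_one,
        zero_sub, add_zero, sub_zero, zero_mul, neg_zero]
      first
      | (calc |(a:ℝ) + -0| = |a| := by norm_num
          _ < δ + ε := by linarith)
      | linarith
    have hint1 : IntervalIntegrable (fun y : ℝ => (C:ℂ) * (((a:ℝ):ℂ) + (y:ℂ) * I)⁻¹)
        volume (-β) β := (continuous_const.mul (aux_cont_v a ha)).intervalIntegrable _ _
    have hint2 : IntervalIntegrable (fun y : ℝ => H (((a:ℝ):ℂ) + (y:ℂ) * I))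
        volume (-β) β := by
      apply ContinuousOn.intervalIntegrable
      intro y _
      have hc : Continuous (fun y : ℝ => ((a:ℝ):ℂ) + (y:ℂ) * I) :=
        continuous_const.add (Complex.continuous_ofReal.mul continuous_const)
      have : ContinuousAt (H ∘ fun y : ℝ => ((a:ℝ):ℂ) + (y:ℂ) * I) y :=
        ContinuousAt.comp (f := fun y : ℝ => ((a:ℝ):ℂ) + (y:ℂ) * I) (x := y)
          (hHd _ (hre y)).continuousAt hc.continuousAt
      exact this.continuousWithinAt
    rw [← intervalIntegral.integral_const_mul, ← intervalIntegral.integral_add hint1 hint2]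
    apply intervalIntegral.integral_congr
    intro y _
    apply hpt
    · intro h
      have := congrArg Complex.re h
      simp at this
      exact ha this
    · exact hre y
  rw [seg_h (-β) (by linarith), seg_h β (by linarith),
    seg_v δ (by linarith) (by rw [abs_of_pos hδ]),
    seg_v (-δ) (by linarith) (by rw [abs_of_neg (by linarith)]; simp)]
  have hri := rect_inv δ β hδ hβ
  simp only [smul_eq_mul] at hrect hri ⊢
  linear_combination (C:ℂ) * hri + hrect

/-- Lemma 2.6 (a Tauberian-type lemma): if the (analytically extended) Laplace transform
`F` of `f` is analytic on the strip `{|Re z| < δ + ε}` except for a simple pole at `0`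
with residue `C`, is integrable on the vertical lines `Re z = ±δ`, tends to `0` as
`Im z → ±∞` uniformly on `|Re z| ≤ δ`, and the Laplace inversion formula holds on the
line `Re z = δ`, then `|f(t) − C| ≤ (ψ/(2π)) e^{−δ t}` for all `t > 0`, where
`ψ = ∫ |F(−δ + iy)| dy`. -/
theorem stmt3 (f : ℝ → ℝ) (F : ℂ → ℂ) (C : ℝ) (δ ε : ℝ) (hδ : 0 < δ) (hε : 0 < ε)
    -- (1) F is analytic on the strip minus the origin
    (hF : AnalyticOnNhd ℂ F ({z : ℂ | |z.re| < δ + ε} \ {0}))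
    -- (2) F has a simple pole at 0 with residue C
    (hpole : ∃ g : ℂ → ℂ, AnalyticOnNhd ℂ g {z : ℂ | |z.re| < δ + ε} ∧
      ∀ z ∈ ({z : ℂ | |z.re| < δ + ε} \ {0} : Set ℂ), F z = (C : ℂ) / z + g z)
    -- (3) integrability on the line Re z = δ
    (h3 : Integrable fun y : ℝ => F (δ + y * Complex.I))
    -- (4) F(x+iy) → 0 as y → ±∞, uniformly in x ∈ [−δ, δ]
    (h4 : ∀ c : ℝ, 0 < c → ∃ M : ℝ, ∀ x : ℝ, |x| ≤ δ → ∀ y : ℝ, M ≤ |y| →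
      ‖F (x + y * Complex.I)‖ ≤ c)
    -- (5) integrability on the line Re z = −δ
    (h5 : Integrable fun y : ℝ => F (-δ + y * Complex.I))
    -- (6) Laplace inversion formula
    (h6 : ∀ t : ℝ, 0 < t →
      Tendsto (fun β : ℝ => (1 / (2 * Real.pi * Complex.I)) *
          ∫ y in -β..β, F (δ + y * Complex.I) * Complex.exp ((δ + y * Complex.I) * t)
            * Complex.I)
        atTop (nhds ((f t : ℝ) : ℂ))) :
    ∀ t : ℝ, 0 < t →
      |f t - C| ≤ ((∫ y : ℝ, ‖F (-δ + y * Complex.I)‖) / (2 * Real.pi))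
        * Real.exp (-δ * t) := by
  obtain ⟨g, hg, hFg⟩ := hpole
  intro t ht
  set Bfun : ℝ → ℂ := fun y => F (-(δ:ℂ) + y * I) * Complex.exp ((-(δ:ℂ) + y * I) * t)
    with hBfun
  -- continuity of F on the line Re = -δ
  have hFcontm : Continuous fun y : ℝ => F (-(δ:ℂ) + y * I) := by
    rw [continuous_iff_continuousAt]
    intro y
    have hz : (-(δ:ℂ) + y * I) ∈ ({z : ℂ | |z.re| < δ + ε} \ {0} : Set ℂ) := by
      constructor
      · simp only [Set.mem_setOf_eq, add_re, neg_re, ofReal_re, mul_re, I_re, mul_zero,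
          ofReal_im, I_im, mul_one, zero_sub, sub_zero, zero_mul, neg_zero, add_zero]
        rw [abs_of_neg (by linarith), neg_neg]
        linarith
      · intro h
        simp only [Set.mem_singleton_iff] at h
        have := congrArg Complex.re h
        simp at this
        linarith
    have hc : Continuous fun y : ℝ => -(δ:ℂ) + y * I :=
      continuous_const.add (Complex.continuous_ofReal.mul continuous_const)
    have : ContinuousAt (F ∘ fun y : ℝ => -(δ:ℂ) + y * I) y :=
      ContinuousAt.comp (f := fun y : ℝ => -(δ:ℂ) + y * I) (x := y)
        ((hF _ hz).continuousAt) hc.continuousAt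
    exact this
  have hnormB : ∀ y : ℝ, ‖Bfun y‖ = ‖F (-(δ:ℂ) + y * I)‖ * Real.exp (-δ * t) := by
    intro y
    rw [hBfun]
    simp only [norm_mul, Complex.norm_exp]
    congr 2
    simp [mul_re]
  -- Integrability of Bfun
  have hBint : Integrable Bfun := by
    refine Integrable.mono' (h5.norm.mul_const (Real.exp (-δ * t))) ?_ ?_
    · apply Continuous.aestronglyMeasurable
      exact hFcontm.mul (Continuous.cexp (by
        exact (continuous_const.add (Complex.continuous_ofReal.mul continuous_const)).mul
          continuous_const))
    · filter_upwards with y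
      rw [hnormB y]
  -- limit of truncated integrals on the left line
  have hBlim : Tendsto (fun β : ℝ => ∫ y in -β..β, Bfun y) atTop (nhds (∫ y, Bfun y)) :=
    intervalIntegral_tendsto_integral hBint tendsto_neg_atTop_atBot tendsto_id
  -- horizontal integrals tend to 0
  have hhoriz : ∀ s : ℝ → ℝ, (∀ᶠ β in atTop, |s β| = β) →
      Tendsto (fun β : ℝ => ∫ x in -δ..δ,
        F ((x:ℂ) + ((s β : ℝ):ℂ) * I) * Complex.exp (((x:ℂ) + ((s β : ℝ):ℂ) * I) * t))
        atTop (nhds 0) := by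
    intro s hs
    rw [NormedAddCommGroup.tendsto_nhds_zero]
    intro ε' hε'
    set c : ℝ := ε' / (2 * δ * Real.exp (δ * t) + 1) with hc
    have hD : 0 < 2 * δ * Real.exp (δ * t) := by positivity
    have hcpos : 0 < c := by positivity
    obtain ⟨M, hM⟩ := h4 c hcpos
    filter_upwards [eventually_ge_atTop (max M 1), hs] with β hβ hsβ
    have hβ1 : (1:ℝ) ≤ β := le_trans (le_max_right _ _) hβ
    have hMβ : M ≤ |s β| := by rw [hsβ]; exact le_trans (le_max_left _ _) hβ
    have hb : ‖∫ x in -δ..δ,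
        F ((x:ℂ) + ((s β : ℝ):ℂ) * I) * Complex.exp (((x:ℂ) + ((s β : ℝ):ℂ) * I) * t)‖
        ≤ c * Real.exp (δ * t) * |δ - -δ| := by
      apply intervalIntegral.norm_integral_le_of_norm_le_const
      intro x hx
      rw [Set.uIoc_of_le (by linarith : (-δ:ℝ) ≤ δ)] at hx
      have hxd : |x| ≤ δ := abs_le.mpr ⟨le_of_lt hx.1, hx.2⟩
      rw [norm_mul]
      have h1 : ‖F ((x:ℂ) + ((s β : ℝ):ℂ) * I)‖ ≤ c := hM x hxd (s β) hMβ
      have h2 : ‖Complex.exp (((x:ℂ) + ((s β : ℝ):ℂ) * I) * t)‖ ≤ Real.exp (δ * t) := by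
        rw [Complex.norm_exp]
        apply Real.exp_le_exp.mpr
        have : (((x:ℂ) + ((s β : ℝ):ℂ) * I) * t).re = x * t := by
          simp [mul_re]
        rw [this]
        exact mul_le_mul_of_nonneg_right (le_trans (le_abs_self x) hxd) (le_of_lt ht)
      exact mul_le_mul h1 h2 (norm_nonneg _) (le_of_lt hcpos)
    have habs : |δ - -δ| = 2 * δ := by rw [abs_of_pos (by linarith)]; ring
    rw [habs] at hb
    apply lt_of_le_of_lt hb
    rw [hc]
    rw [div_mul_eq_mul_div, div_mul_eq_mul_div, div_lt_iff₀ (by positivity)]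
    nlinarith [Real.exp_pos (δ * t), hε'.le]
  have hTop := hhoriz (fun β => β) (by
    filter_upwards [eventually_ge_atTop 0] with β hβ
    simpa using _root_.abs_of_nonneg hβ)
  have hBot := hhoriz (fun β => -β) (by
    filter_upwards [eventually_ge_atTop 0] with β hβ
    simp [_root_.abs_of_nonneg hβ])
  -- rectangle identity, eventually in β
  have hkey : ∀ᶠ β in atTop,
      I * (∫ y in -β..β, F ((δ:ℂ) + y * I) * Complex.exp (((δ:ℂ) + y * I) * t))
      = 2 * Real.pi * I * C
        + (∫ x in -δ..δ, F ((x:ℂ) + (β:ℂ) * I) * Complex.exp (((x:ℂ) + (β:ℂ) * I) * t))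
        - (∫ x in -δ..δ, F ((x:ℂ) + (-β:ℂ) * I) * Complex.exp (((x:ℂ) + (-β:ℂ) * I) * t))
        + I * (∫ y in -β..β, Bfun y) := by
    filter_upwards [eventually_gt_atTop 0] with β hβ
    have hk := key_rect F g C δ ε hδ hε hg hFg t β hβ
    push_cast at hk
    simp only [smul_eq_mul] at hk
    rw [hBfun]
    linear_combination hk
  -- inversion formula, rewritten
  have h6' := h6 t ht
  simp only [intervalIntegral.integral_mul_const] at h6'
  push_cast at hTop hBot
  -- the right-hand side limit
  have hlim2 : Tendsto (fun β : ℝ =>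
      (1 / (2 * (Real.pi:ℂ) * I)) * (2 * Real.pi * I * C
        + (∫ x in -δ..δ, F ((x:ℂ) + (β:ℂ) * I) * Complex.exp (((x:ℂ) + (β:ℂ) * I) * t))
        - (∫ x in -δ..δ, F ((x:ℂ) + (-β:ℂ) * I) * Complex.exp (((x:ℂ) + (-β:ℂ) * I) * t))
        + I * (∫ y in -β..β, Bfun y)))
      atTop (nhds ((1 / (2 * (Real.pi:ℂ) * I)) * (2 * Real.pi * I * C + 0 - 0
        + I * (∫ y, Bfun y)))) :=
    Tendsto.const_mul _ (((tendsto_const_nhds.add hTop).sub hBot).add (hBlim.const_mul I))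
  -- identify the two limits
  have hIpi : (2 * (Real.pi:ℂ) * I) ≠ 0 :=
    mul_ne_zero (mul_ne_zero two_ne_zero (Complex.ofReal_ne_zero.mpr Real.pi_ne_zero))
      Complex.I_ne_zero
  have hstep : Tendsto (fun β : ℝ =>
      (1 / (2 * (Real.pi:ℂ) * I)) * ((∫ y in -β..β,
        F ((δ:ℂ) + y * I) * Complex.exp (((δ:ℂ) + y * I) * t)) * I))
      atTop (nhds ((1 / (2 * (Real.pi:ℂ) * I)) * (2 * Real.pi * I * C + 0 - 0
        + I * (∫ y, Bfun y)))) := by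
    apply hlim2.congr'
    filter_upwards [hkey] with β hk
    rw [mul_comm (∫ y in -β..β, F ((δ:ℂ) + y * I) * Complex.exp (((δ:ℂ) + y * I) * t)) I, hk]
  have huniq : ((f t : ℝ) : ℂ) = (1 / (2 * (Real.pi:ℂ) * I)) * (2 * Real.pi * I * C + 0 - 0
      + I * (∫ y, Bfun y)) := tendsto_nhds_unique h6' hstep
  have hfc : ((f t : ℝ) : ℂ) - C = (∫ y, Bfun y) / (2 * (Real.pi:ℂ)) := by
    rw [huniq, eq_div_iff (mul_ne_zero two_ne_zero
      (Complex.ofReal_ne_zero.mpr Real.pi_ne_zero))]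
    generalize (∫ y, Bfun y) = B
    field_simp
    ring
  -- take norms
  have habs : |f t - C| = ‖∫ y, Bfun y‖ / (2 * Real.pi) := by
    have : |f t - C| = ‖(((f t : ℝ) : ℂ) - C)‖ := by
      rw [show (((f t : ℝ) : ℂ) - C) = (((f t - C : ℝ) : ℂ)) by push_cast; ring]
      rw [Complex.norm_real, Real.norm_eq_abs]
    rw [this, hfc, norm_div]
    congr 1
    rw [show (2 * (Real.pi:ℂ)) = (((2 * Real.pi : ℝ)) : ℂ) by push_cast; ring]
    rw [Complex.norm_real, Real.norm_eq_abs, abs_of_pos (by positivity)]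
  rw [habs]
  have hbound : ‖∫ y, Bfun y‖ ≤ (∫ y : ℝ, ‖F (-(δ:ℂ) + y * I)‖) * Real.exp (-δ * t) := by
    calc ‖∫ y, Bfun y‖ ≤ ∫ y, ‖Bfun y‖ := norm_integral_le_integral_norm _
      _ = ∫ y : ℝ, ‖F (-(δ:ℂ) + (y:ℝ) * I)‖ * Real.exp (-δ * t) := by
          apply MeasureTheory.integral_congr_ae
          filter_upwards with y
          exact hnormB y
      _ = (∫ y : ℝ, ‖F (-(δ:ℂ) + y * I)‖) * Real.exp (-δ * t) := by
          rw [MeasureTheory.integral_mul_const]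
  rw [div_le_iff₀ (by positivity), mul_comm ((∫ y : ℝ, ‖F (-(δ:ℂ) + y * I)‖) / (2 * Real.pi))
    (Real.exp (-δ * t))]
  calc ‖∫ y, Bfun y‖ ≤ (∫ y : ℝ, ‖F (-(δ:ℂ) + y * I)‖) * Real.exp (-δ * t) := hbound
    _ = Real.exp (-δ * t) * ((∫ y : ℝ, ‖F (-(δ:ℂ) + y * I)‖) / (2 * Real.pi)) * (2 * Real.pi) := by
        rw [mul_assoc, div_mul_cancel₀ _ (by positivity), mul_comm]
end
end

section
/- Let (X, Y) be a centered Gaussian vector with Var(X) = Var(Y) = 1 and Cov(X, Y) = ρ ∈ (−1,1). Let a ∈ ℝ, b ≠ 0, c ∈ ℝ, and set T = a + b(X+c)², Tʹ = a + b(Y+c)². Then the correlation of T and Tʹ equals (ρ² + 2c²ρ)/(1 + 2c²). -/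
open MeasureTheory ProbabilityTheory Real Filter Asymptotics
open scoped NNReal ENNReal

noncomputable section

lemma myInt {b : ℝ} (hb : 0 < b) (n : ℕ) :
    Integrable (fun x : ℝ => x ^ n * Real.exp (-b * x ^ 2)) := by
  have h : (-1 : ℝ) < n := lt_of_lt_of_le (by norm_num) (Nat.cast_nonneg n)
  simpa [Real.rpow_natCast] using integrable_rpow_mul_exp_neg_mul_sq hb h

lemma myOdd {b : ℝ} {n : ℕ} (hn : Odd n) :
    ∫ x : ℝ, x ^ n * Real.exp (-b * x ^ 2) = 0 := by
  have h := MeasureTheory.integral_neg_eq_self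
    (fun x : ℝ => x ^ n * Real.exp (-b * x ^ 2)) volume
  have e : ∀ x : ℝ, (-x) ^ n * Real.exp (-b * (-x) ^ 2)
      = -(x ^ n * Real.exp (-b * x ^ 2)) := by
    intro x; rw [hn.neg_pow, neg_sq]; ring
  simp_rw [e, integral_neg] at h
  linarith

lemma myParts {b : ℝ} (hb : 0 < b) (n : ℕ) :
    2 * b * ∫ x : ℝ, x ^ (n + 2) * Real.exp (-b * x ^ 2)
      = (n + 1 : ℝ) * ∫ x : ℝ, x ^ n * Real.exp (-b * x ^ 2) := by
  set f : ℝ → ℝ := fun x => x ^ (n + 1) * Real.exp (-b * x ^ 2) with hf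
  set g : ℝ → ℝ := fun x => (n + 1 : ℝ) * (x ^ n * Real.exp (-b * x ^ 2))
      - 2 * b * (x ^ (n + 2) * Real.exp (-b * x ^ 2)) with hg
  have hderiv : ∀ x : ℝ, HasDerivAt f (g x) x := by
    intro x
    have h1 : HasDerivAt (fun x : ℝ => x ^ (n + 1)) ((n + 1 : ℝ) * x ^ n) x := by
      simpa using hasDerivAt_pow (n + 1) x
    have h2 : HasDerivAt (fun x : ℝ => Real.exp (-b * x ^ 2))
        (Real.exp (-b * x ^ 2) * (-b * (2 * x))) x := by
      have h3 : HasDerivAt (fun x : ℝ => -b * x ^ 2) (-b * (2 * x)) x := by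
        simpa using (hasDerivAt_pow 2 x).const_mul (-b)
      exact h3.exp
    have := h1.fun_mul h2
    refine this.congr_deriv ?_
    simp only [hg]
    push_cast
    ring
  have hint : Integrable g :=
    ((myInt hb n).const_mul _).sub ((myInt hb (n + 2)).const_mul _)
  have htop : Tendsto f atTop (nhds 0) := by
    have hlo := rpow_mul_exp_neg_mul_sq_isLittleO_exp_neg hb ((n : ℝ) + 1)
    have h2 : Tendsto (fun x : ℝ => Real.exp (-(1 / 2) * x)) atTop (nhds 0) :=
      Real.tendsto_exp_atBot.comp
        (Tendsto.const_mul_atTop_of_neg (by norm_num : (-(1/2) : ℝ) < 0) tendsto_id)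
    have := hlo.isBigO.trans_tendsto h2
    have e : (fun x : ℝ => x ^ ((n : ℝ) + 1) * Real.exp (-b * x ^ 2)) = f := by
      funext x
      rw [show ((n : ℝ) + 1) = ((n + 1 : ℕ) : ℝ) by push_cast; ring, Real.rpow_natCast]
    rwa [e] at this
  have hnegtop : Tendsto (fun x : ℝ => f (-x)) atTop (nhds 0) := by
    have e : (fun x : ℝ => f (-x)) = fun x => (-1 : ℝ) ^ (n + 1) * f x := by
      funext x
      simp only [hf, neg_sq]
      rw [neg_pow]
      ring
    rw [e]
    have h := htop.const_mul ((-1 : ℝ) ^ (n + 1))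
    simp only [mul_zero] at h
    exact h
  have hbot : Tendsto f atBot (nhds 0) := by
    have := hnegtop.comp tendsto_neg_atBot_atTop
    simpa only [Function.comp_def, neg_neg] using this
  have h0 : ∫ x, g x = 0 - 0 :=
    MeasureTheory.integral_of_hasDerivAt_of_tendsto hderiv hint hbot htop
  have hsub : ∫ x, g x = (n + 1 : ℝ) * (∫ x : ℝ, x ^ n * Real.exp (-b * x ^ 2))
      - 2 * b * ∫ x : ℝ, x ^ (n + 2) * Real.exp (-b * x ^ 2) := by
    simp only [hg]
    rw [integral_sub ((myInt hb n).const_mul _) ((myInt hb (n + 2)).const_mul _),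
      integral_const_mul, integral_const_mul]
  rw [hsub] at h0
  linarith

lemma myPdfEq {v : ℝ≥0} (hv : v ≠ 0) (x : ℝ) :
    gaussianPDFReal 0 v x
      = (Real.sqrt (2 * π * v))⁻¹ * Real.exp (-(2 * (v : ℝ))⁻¹ * x ^ 2) := by
  rw [gaussianPDFReal]
  congr 1
  ring

lemma myGaussInt {v : ℝ≥0} (hv : v ≠ 0) (g : ℝ → ℝ) :
    ∫ x, g x ∂(gaussianReal 0 v) = ∫ x, gaussianPDFReal 0 v x * g x := by
  rw [gaussianReal_of_var_ne_zero 0 hv]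
  have h : gaussianPDF 0 v
      = fun x => ((Real.toNNReal (gaussianPDFReal 0 v x) : ℝ≥0) : ℝ≥0∞) := rfl
  rw [h, integral_withDensity_eq_integral_smul
    (measurable_gaussianPDFReal 0 v).real_toNNReal g]
  congr 1
  funext x
  rw [NNReal.smul_def, smul_eq_mul, Real.coe_toNNReal _ (gaussianPDFReal_nonneg 0 v x)]

lemma myGaussIntegrable {v : ℝ≥0} (hv : v ≠ 0) {g : ℝ → ℝ}
    (hg : Integrable (fun x => gaussianPDFReal 0 v x * g x) volume) :
    Integrable g (gaussianReal 0 v) := by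
  rw [gaussianReal_of_var_ne_zero 0 hv]
  have h : gaussianPDF 0 v
      = fun x => ((Real.toNNReal (gaussianPDFReal 0 v x) : ℝ≥0) : ℝ≥0∞) := rfl
  rw [h, integrable_withDensity_iff_integrable_smul
    (measurable_gaussianPDFReal 0 v).real_toNNReal]
  have e : (fun x => Real.toNNReal (gaussianPDFReal 0 v x) • g x)
      = fun x => gaussianPDFReal 0 v x * g x := by
    funext x
    rw [NNReal.smul_def, smul_eq_mul, Real.coe_toNNReal _ (gaussianPDFReal_nonneg 0 v x)]
  rwa [e]

lemma myVpos {v : ℝ≥0} (hv : v ≠ 0) : (0 : ℝ) < 2 * (v : ℝ) := by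
  have : (0 : ℝ) < v := by exact_mod_cast lt_of_le_of_ne zero_le (Ne.symm hv)
  linarith

lemma myPdfMul {v : ℝ≥0} (hv : v ≠ 0) (n : ℕ) :
    (fun x => gaussianPDFReal 0 v x * x ^ n)
      = fun x => (Real.sqrt (2 * π * v))⁻¹
          * (x ^ n * Real.exp (-(2 * (v : ℝ))⁻¹ * x ^ 2)) := by
  funext x
  rw [myPdfEq hv]
  ring

lemma integrable_pow_gauss {v : ℝ≥0} (hv : v ≠ 0) (n : ℕ) :
    Integrable (fun x : ℝ => x ^ n) (gaussianReal 0 v) := by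
  apply myGaussIntegrable hv
  rw [myPdfMul hv n]
  exact (myInt (inv_pos.mpr (myVpos hv)) n).const_mul _

lemma integral_pow_gauss {v : ℝ≥0} (hv : v ≠ 0) (n : ℕ) :
    ∫ x, x ^ n ∂(gaussianReal 0 v)
      = (Real.sqrt (2 * π * v))⁻¹
          * ∫ x : ℝ, x ^ n * Real.exp (-(2 * (v : ℝ))⁻¹ * x ^ 2) := by
  rw [myGaussInt hv, myPdfMul hv n, integral_const_mul]

lemma gauss_m1 {v : ℝ≥0} (hv : v ≠ 0) : ∫ x, x ^ 1 ∂(gaussianReal 0 v) = 0 := by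
  rw [integral_pow_gauss hv, myOdd odd_one, mul_zero]

lemma gauss_m3 {v : ℝ≥0} (hv : v ≠ 0) : ∫ x, x ^ 3 ∂(gaussianReal 0 v) = 0 := by
  rw [integral_pow_gauss hv, myOdd (by decide : Odd 3), mul_zero]

lemma gauss_norm {v : ℝ≥0} (hv : v ≠ 0) :
    (Real.sqrt (2 * π * v))⁻¹
      * ∫ x : ℝ, x ^ 0 * Real.exp (-(2 * (v : ℝ))⁻¹ * x ^ 2) = 1 := by
  rw [← integral_pow_gauss hv 0]
  simp

lemma gauss_m2 {v : ℝ≥0} (hv : v ≠ 0) : ∫ x, x ^ 2 ∂(gaussianReal 0 v) = v := by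
  have hb : (0 : ℝ) < (2 * (v : ℝ))⁻¹ := inv_pos.mpr (myVpos hv)
  have hp := myParts hb 0
  have hn := gauss_norm hv
  have hv2 := myVpos hv
  rw [integral_pow_gauss hv]
  set C := (Real.sqrt (2 * π * (v : ℝ)))⁻¹ with hC
  set J0 := ∫ x : ℝ, x ^ 0 * Real.exp (-(2 * (v : ℝ))⁻¹ * x ^ 2)
  set J2 := ∫ x : ℝ, x ^ (0 + 2) * Real.exp (-(2 * (v : ℝ))⁻¹ * x ^ 2) with hJ2
  have h2b : 2 * (2 * (v : ℝ))⁻¹ = (v : ℝ)⁻¹ := by field_simp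
  rw [h2b] at hp
  -- hp : v⁻¹ * J2 = 1 * J0, hn : C * J0 = 1
  have hJ : J2 = (v : ℝ) * J0 := by
    field_simp at hp
    push_cast at hp
    linarith [hp]
  rw [hJ]
  calc C * ((v:ℝ) * J0) = (v:ℝ) * (C * J0) := by ring
  _ = v := by rw [hn, mul_one]

lemma gauss_m4 {v : ℝ≥0} (hv : v ≠ 0) :
    ∫ x, x ^ 4 ∂(gaussianReal 0 v) = 3 * (v : ℝ) ^ 2 := by
  have hb : (0 : ℝ) < (2 * (v : ℝ))⁻¹ := inv_pos.mpr (myVpos hv)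
  have hp := myParts hb 2
  have hm2 := gauss_m2 hv
  have hv2 := myVpos hv
  rw [integral_pow_gauss hv] at hm2 ⊢
  set C := (Real.sqrt (2 * π * (v : ℝ)))⁻¹ with hC
  set J2 := ∫ x : ℝ, x ^ 2 * Real.exp (-(2 * (v : ℝ))⁻¹ * x ^ 2) with hJ2
  set J4 := ∫ x : ℝ, x ^ 4 * Real.exp (-(2 * (v : ℝ))⁻¹ * x ^ 2) with hJ4
  have h2b : 2 * (2 * (v : ℝ))⁻¹ = (v : ℝ)⁻¹ := by field_simp
  rw [h2b] at hp
  -- hp : v⁻¹ * J4 = 3 * J2 ; hm2 : C * J2 = v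
  have hJ : J4 = 3 * (v : ℝ) * J2 := by
    field_simp at hp
    push_cast at hp
    linarith [hp]
  rw [hJ]
  calc C * (3 * (v:ℝ) * J2) = 3 * (v:ℝ) * (C * J2) := by ring
  _ = 3 * (v:ℝ) ^ 2 := by rw [hm2]; ring

lemma myIntAdd {Ω : Type*} [MeasurableSpace Ω] {P : Measure Ω} {f g : Ω → ℝ}
    (hf : Integrable f P) (hg : Integrable g P) :
    Integrable (fun ω => f ω + g ω) P := hf.add hg

lemma int9 {Ω : Type*} [MeasurableSpace Ω] (P : Measure Ω)
    {f1 f2 f3 f4 f5 f6 f7 f8 f9 : Ω → ℝ} (c1 c2 c3 c4 c5 c6 c7 c8 c9 : ℝ)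
    (h1 : Integrable f1 P) (h2 : Integrable f2 P) (h3 : Integrable f3 P)
    (h4 : Integrable f4 P) (h5 : Integrable f5 P) (h6 : Integrable f6 P)
    (h7 : Integrable f7 P) (h8 : Integrable f8 P) (h9 : Integrable f9 P) :
    ∫ ω, (c1 * f1 ω + c2 * f2 ω + c3 * f3 ω + c4 * f4 ω + c5 * f5 ω + c6 * f6 ω
        + c7 * f7 ω + c8 * f8 ω + c9 * f9 ω) ∂P
      = c1 * (∫ ω, f1 ω ∂P) + c2 * (∫ ω, f2 ω ∂P) + c3 * (∫ ω, f3 ω ∂P)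
        + c4 * (∫ ω, f4 ω ∂P) + c5 * (∫ ω, f5 ω ∂P) + c6 * (∫ ω, f6 ω ∂P)
        + c7 * (∫ ω, f7 ω ∂P) + c8 * (∫ ω, f8 ω ∂P) + c9 * (∫ ω, f9 ω ∂P) := by
  have g1 := h1.const_mul c1
  have g2 := h2.const_mul c2
  have g3 := h3.const_mul c3
  have g4 := h4.const_mul c4
  have g5 := h5.const_mul c5
  have g6 := h6.const_mul c6
  have g7 := h7.const_mul c7
  have g8 := h8.const_mul c8
  have g9 := h9.const_mul c9
  have s2 := myIntAdd g1 g2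
  have s3 := myIntAdd s2 g3
  have s4 := myIntAdd s3 g4
  have s5 := myIntAdd s4 g5
  have s6 := myIntAdd s5 g6
  have s7 := myIntAdd s6 g7
  have s8 := myIntAdd s7 g8
  rw [integral_add s8 g9, integral_add s7 g8, integral_add s6 g7,
    integral_add s5 g6, integral_add s4 g5, integral_add s3 g4,
    integral_add s2 g3, integral_add g1 g2,
    integral_const_mul, integral_const_mul, integral_const_mul, integral_const_mul,
    integral_const_mul, integral_const_mul, integral_const_mul, integral_const_mul,
    integral_const_mul]

/-- Correlation of `T = a + b(X+c)²` and `T' = a + b(Y+c)²` for a centered Gaussian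
vector `(X,Y)` with unit variances and correlation `ρ`:
`Cor(T,T') = (ρ² + 2c²ρ)/(1 + 2c²)`.
The Gaussian vector hypothesis is expressed through the laws of all linear
combinations `sX + tY`. -/
theorem stmt8 {Ω : Type*} [MeasurableSpace Ω] (P : Measure Ω) [IsProbabilityMeasure P]
    (X Y : Ω → ℝ) (hX : Measurable X) (hY : Measurable Y)
    (ρ : ℝ) (hρ : ρ ∈ Set.Ioo (-1 : ℝ) 1)
    -- (X,Y) is a centered Gaussian vector with Var X = Var Y = 1, Cov(X,Y) = ρ
    (hGauss : ∀ s t : ℝ, Measure.map (fun ω => s * X ω + t * Y ω) P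
      = gaussianReal 0 (Real.toNNReal (s ^ 2 + t ^ 2 + 2 * s * t * ρ)))
    (a b c : ℝ) (hb : b ≠ 0)
    (T T' : Ω → ℝ)
    (hT : T = fun ω => a + b * (X ω + c) ^ 2)
    (hT' : T' = fun ω => a + b * (Y ω + c) ^ 2) :
    ((∫ ω, T ω * T' ω ∂P) - (∫ ω, T ω ∂P) * ∫ ω, T' ω ∂P)
        / Real.sqrt (variance T P * variance T' P)
      = (ρ ^ 2 + 2 * c ^ 2 * ρ) / (1 + 2 * c ^ 2) := by
  obtain ⟨hρ1, hρ2⟩ := hρ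
  -- transfer of moments along the law
  have key : ∀ (Z : Ω → ℝ), Measurable Z → ∀ v : ℝ≥0, v ≠ 0 →
      Measure.map Z P = gaussianReal 0 v → ∀ n : ℕ,
      Integrable (fun ω => Z ω ^ n) P ∧
        ∫ ω, Z ω ^ n ∂P = ∫ x, x ^ n ∂(gaussianReal 0 v) := by
    intro Z hZ v hv hmap n
    have hsm : AEStronglyMeasurable (fun x : ℝ => x ^ n) (Measure.map Z P) :=
      (measurable_id.pow_const n).aestronglyMeasurable
    constructor
    · have h1 : Integrable (fun x : ℝ => x ^ n) (Measure.map Z P) := by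
        rw [hmap]; exact integrable_pow_gauss hv n
      exact (integrable_map_measure hsm hZ.aemeasurable).mp h1
    · rw [← hmap, integral_map hZ.aemeasurable hsm]
  -- the three laws
  have hmX : Measure.map X P = gaussianReal 0 1 := by
    have h := hGauss 1 0
    have e : (fun ω => 1 * X ω + 0 * Y ω) = X := by funext ω; ring
    rw [e, show ((1:ℝ) ^ 2 + 0 ^ 2 + 2 * 1 * 0 * ρ) = 1 by norm_num,
      Real.toNNReal_one] at h
    exact h
  have hmY : Measure.map Y P = gaussianReal 0 1 := by
    have h := hGauss 0 1
    have e : (fun ω => 0 * X ω + 1 * Y ω) = Y := by funext ω; ring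
    rw [e, show ((0:ℝ) ^ 2 + 1 ^ 2 + 2 * 0 * 1 * ρ) = 1 by norm_num,
      Real.toNNReal_one] at h
    exact h
  set S : Ω → ℝ := fun ω => X ω + Y ω with hS_def
  set D : Ω → ℝ := fun ω => X ω - Y ω with hD_def
  have hSmeas : Measurable S := hX.add hY
  have hDmeas : Measurable D := hX.sub hY
  have hmS : Measure.map S P = gaussianReal 0 (Real.toNNReal (2 + 2 * ρ)) := by
    have h := hGauss 1 1
    have e : (fun ω => 1 * X ω + 1 * Y ω) = S := by funext ω; simp [hS_def]
    rw [e, show ((1:ℝ) ^ 2 + 1 ^ 2 + 2 * 1 * 1 * ρ) = 2 + 2 * ρ by ring] at h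
    exact h
  have hmD : Measure.map D P = gaussianReal 0 (Real.toNNReal (2 - 2 * ρ)) := by
    have h := hGauss 1 (-1)
    have e : (fun ω => 1 * X ω + (-1) * Y ω) = D := by
      funext ω; simp [hD_def]; ring
    rw [e, show ((1:ℝ) ^ 2 + (-1) ^ 2 + 2 * 1 * (-1) * ρ) = 2 - 2 * ρ by ring] at h
    exact h
  have hSpos : (0:ℝ) < 2 + 2 * ρ := by linarith
  have hDpos : (0:ℝ) < 2 - 2 * ρ := by linarith
  have hvS : Real.toNNReal (2 + 2 * ρ) ≠ 0 := ne_of_gt (Real.toNNReal_pos.mpr hSpos)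
  have hvD : Real.toNNReal (2 - 2 * ρ) ≠ 0 := ne_of_gt (Real.toNNReal_pos.mpr hDpos)
  have hcS : ((Real.toNNReal (2 + 2 * ρ) : ℝ≥0) : ℝ) = 2 + 2 * ρ :=
    Real.coe_toNNReal _ hSpos.le
  have hcD : ((Real.toNNReal (2 - 2 * ρ) : ℝ≥0) : ℝ) = 2 - 2 * ρ :=
    Real.coe_toNNReal _ hDpos.le
  -- integrability
  have hIX : ∀ n, Integrable (fun ω => X ω ^ n) P :=
    fun n => (key X hX 1 one_ne_zero hmX n).1
  have hIY : ∀ n, Integrable (fun ω => Y ω ^ n) P :=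
    fun n => (key Y hY 1 one_ne_zero hmY n).1
  have hI1 : Integrable (fun _ : Ω => (1:ℝ)) P := integrable_const 1
  have hMon : ∀ i j : ℕ, Integrable (fun ω => X ω ^ i * Y ω ^ j) P := by
    intro i j
    refine ((myIntAdd (hIX (2 * i)) (hIY (2 * j))).div_const 2).mono'
      (((hX.pow_const i).mul (hY.pow_const j)).aestronglyMeasurable)
      (Filter.Eventually.of_forall fun ω => ?_)
    rw [Real.norm_eq_abs, abs_mul, abs_pow, abs_pow]
    have e1 : (|X ω| ^ i) ^ 2 = X ω ^ (2 * i) := by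
      rw [mul_comm 2 i, ← pow_mul, ← abs_pow,
        abs_of_nonneg (Even.pow_nonneg ⟨i, by ring⟩ (X ω))]
    have e2 : (|Y ω| ^ j) ^ 2 = Y ω ^ (2 * j) := by
      rw [mul_comm 2 j, ← pow_mul, ← abs_pow,
        abs_of_nonneg (Even.pow_nonneg ⟨j, by ring⟩ (Y ω))]
    nlinarith [sq_nonneg (|X ω| ^ i - |Y ω| ^ j), pow_nonneg (abs_nonneg (X ω)) i,
      pow_nonneg (abs_nonneg (Y ω)) j]
  -- moment values
  have hE1 : ∫ ω, (1:ℝ) ∂P = 1 := by simp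
  have hEX1 : ∫ ω, X ω ^ 1 ∂P = 0 := by
    rw [(key X hX 1 one_ne_zero hmX 1).2, gauss_m1 one_ne_zero]
  have hEX2 : ∫ ω, X ω ^ 2 ∂P = 1 := by
    rw [(key X hX 1 one_ne_zero hmX 2).2, gauss_m2 one_ne_zero]; norm_num
  have hEX3 : ∫ ω, X ω ^ 3 ∂P = 0 := by
    rw [(key X hX 1 one_ne_zero hmX 3).2, gauss_m3 one_ne_zero]
  have hEX4 : ∫ ω, X ω ^ 4 ∂P = 3 := by
    rw [(key X hX 1 one_ne_zero hmX 4).2, gauss_m4 one_ne_zero]; norm_num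
  have hEY1 : ∫ ω, Y ω ^ 1 ∂P = 0 := by
    rw [(key Y hY 1 one_ne_zero hmY 1).2, gauss_m1 one_ne_zero]
  have hEY2 : ∫ ω, Y ω ^ 2 ∂P = 1 := by
    rw [(key Y hY 1 one_ne_zero hmY 2).2, gauss_m2 one_ne_zero]; norm_num
  have hEY3 : ∫ ω, Y ω ^ 3 ∂P = 0 := by
    rw [(key Y hY 1 one_ne_zero hmY 3).2, gauss_m3 one_ne_zero]
  have hEY4 : ∫ ω, Y ω ^ 4 ∂P = 3 := by
    rw [(key Y hY 1 one_ne_zero hmY 4).2, gauss_m4 one_ne_zero]; norm_num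
  have hES2 : ∫ ω, S ω ^ 2 ∂P = 2 + 2 * ρ := by
    rw [(key S hSmeas _ hvS hmS 2).2, gauss_m2 hvS, hcS]
  have hES3 : ∫ ω, S ω ^ 3 ∂P = 0 := by
    rw [(key S hSmeas _ hvS hmS 3).2, gauss_m3 hvS]
  have hES4 : ∫ ω, S ω ^ 4 ∂P = 12 + 24 * ρ + 12 * ρ ^ 2 := by
    rw [(key S hSmeas _ hvS hmS 4).2, gauss_m4 hvS, hcS]; ring
  have hED3 : ∫ ω, D ω ^ 3 ∂P = 0 := by
    rw [(key D hDmeas _ hvD hmD 3).2, gauss_m3 hvD]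
  have hED4 : ∫ ω, D ω ^ 4 ∂P = 12 - 24 * ρ + 12 * ρ ^ 2 := by
    rw [(key D hDmeas _ hvD hmD 4).2, gauss_m4 hvD, hcD]; ring
  -- mixed moments
  have hM11 : ∫ ω, X ω ^ 1 * Y ω ^ 1 ∂P = ρ := by
    have e : (fun ω => S ω ^ 2) = fun ω =>
        (1:ℝ) * (X ω ^ 2) + 1 * (Y ω ^ 2) + 2 * (X ω ^ 1 * Y ω ^ 1)
          + 0 * 1 + 0 * 1 + 0 * 1 + 0 * 1 + 0 * 1 + 0 * 1 := by
      funext ω; simp only [hS_def]; ring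
    have h2 := hES2
    rw [e, int9 P _ _ _ _ _ _ _ _ _ (hIX 2) (hIY 2) (hMon 1 1)
      hI1 hI1 hI1 hI1 hI1 hI1, hEX2, hEY2, hE1] at h2
    linarith
  have hM21 : ∫ ω, X ω ^ 2 * Y ω ^ 1 ∂P = 0 ∧ ∫ ω, X ω ^ 1 * Y ω ^ 2 ∂P = 0 := by
    have eS : (fun ω => S ω ^ 3) = fun ω =>
        (1:ℝ) * (X ω ^ 3) + 1 * (Y ω ^ 3) + 3 * (X ω ^ 2 * Y ω ^ 1)
          + 3 * (X ω ^ 1 * Y ω ^ 2) + 0 * 1 + 0 * 1 + 0 * 1 + 0 * 1 + 0 * 1 := by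
      funext ω; simp only [hS_def]; ring
    have eD : (fun ω => D ω ^ 3) = fun ω =>
        (1:ℝ) * (X ω ^ 3) + (-1) * (Y ω ^ 3) + (-3) * (X ω ^ 2 * Y ω ^ 1)
          + 3 * (X ω ^ 1 * Y ω ^ 2) + 0 * 1 + 0 * 1 + 0 * 1 + 0 * 1 + 0 * 1 := by
      funext ω; simp only [hD_def]; ring
    have h3 := hES3
    have h4 := hED3
    rw [eS, int9 P _ _ _ _ _ _ _ _ _ (hIX 3) (hIY 3) (hMon 2 1) (hMon 1 2)
      hI1 hI1 hI1 hI1 hI1, hEX3, hEY3, hE1] at h3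
    rw [eD, int9 P _ _ _ _ _ _ _ _ _ (hIX 3) (hIY 3) (hMon 2 1) (hMon 1 2)
      hI1 hI1 hI1 hI1 hI1, hEX3, hEY3, hE1] at h4
    constructor <;> linarith
  have hM22 : ∫ ω, X ω ^ 2 * Y ω ^ 2 ∂P = 1 + 2 * ρ ^ 2 := by
    have eS : (fun ω => S ω ^ 4) = fun ω =>
        (1:ℝ) * (X ω ^ 4) + 1 * (Y ω ^ 4) + 4 * (X ω ^ 3 * Y ω ^ 1)
          + 4 * (X ω ^ 1 * Y ω ^ 3) + 6 * (X ω ^ 2 * Y ω ^ 2)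
          + 0 * 1 + 0 * 1 + 0 * 1 + 0 * 1 := by
      funext ω; simp only [hS_def]; ring
    have eD : (fun ω => D ω ^ 4) = fun ω =>
        (1:ℝ) * (X ω ^ 4) + 1 * (Y ω ^ 4) + (-4) * (X ω ^ 3 * Y ω ^ 1)
          + (-4) * (X ω ^ 1 * Y ω ^ 3) + 6 * (X ω ^ 2 * Y ω ^ 2)
          + 0 * 1 + 0 * 1 + 0 * 1 + 0 * 1 := by
      funext ω; simp only [hD_def]; ring
    have h3 := hES4
    have h4 := hED4
    rw [eS, int9 P _ _ _ _ _ _ _ _ _ (hIX 4) (hIY 4) (hMon 3 1) (hMon 1 3)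
      (hMon 2 2) hI1 hI1 hI1 hI1, hEX4, hEY4, hE1] at h3
    rw [eD, int9 P _ _ _ _ _ _ _ _ _ (hIX 4) (hIY 4) (hMon 3 1) (hMon 1 3)
      (hMon 2 2) hI1 hI1 hI1 hI1, hEX4, hEY4, hE1] at h4
    linarith
  -- expectations of T, T', products
  have eT : T = fun ω =>
      (a + b * c ^ 2) * (1:ℝ) + (2 * b * c) * (X ω ^ 1) + b * (X ω ^ 2)
        + 0 * 1 + 0 * 1 + 0 * 1 + 0 * 1 + 0 * 1 + 0 * 1 := by
    funext ω; simp only [hT]; ring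
  have eT' : T' = fun ω =>
      (a + b * c ^ 2) * (1:ℝ) + (2 * b * c) * (Y ω ^ 1) + b * (Y ω ^ 2)
        + 0 * 1 + 0 * 1 + 0 * 1 + 0 * 1 + 0 * 1 + 0 * 1 := by
    funext ω; simp only [hT']; ring
  have hET : ∫ ω, T ω ∂P = a + b * (1 + c ^ 2) := by
    rw [eT, int9 P _ _ _ _ _ _ _ _ _ hI1 (hIX 1) (hIX 2)
      hI1 hI1 hI1 hI1 hI1 hI1, hE1, hEX1, hEX2]
    ring
  have hET' : ∫ ω, T' ω ∂P = a + b * (1 + c ^ 2) := by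
    rw [eT', int9 P _ _ _ _ _ _ _ _ _ hI1 (hIY 1) (hIY 2)
      hI1 hI1 hI1 hI1 hI1 hI1, hE1, hEY1, hEY2]
    ring
  have eTsq : T ^ 2 = fun ω =>
      (a ^ 2 + 2 * a * b * c ^ 2 + b ^ 2 * c ^ 4) * (1:ℝ)
        + (4 * a * b * c + 4 * b ^ 2 * c ^ 3) * (X ω ^ 1)
        + (2 * a * b + 6 * b ^ 2 * c ^ 2) * (X ω ^ 2)
        + (4 * b ^ 2 * c) * (X ω ^ 3) + b ^ 2 * (X ω ^ 4)
        + 0 * 1 + 0 * 1 + 0 * 1 + 0 * 1 := by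
    funext ω; simp only [Pi.pow_apply, hT]; ring
  have eT'sq : T' ^ 2 = fun ω =>
      (a ^ 2 + 2 * a * b * c ^ 2 + b ^ 2 * c ^ 4) * (1:ℝ)
        + (4 * a * b * c + 4 * b ^ 2 * c ^ 3) * (Y ω ^ 1)
        + (2 * a * b + 6 * b ^ 2 * c ^ 2) * (Y ω ^ 2)
        + (4 * b ^ 2 * c) * (Y ω ^ 3) + b ^ 2 * (Y ω ^ 4)
        + 0 * 1 + 0 * 1 + 0 * 1 + 0 * 1 := by
    funext ω; simp only [Pi.pow_apply, hT']; ring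
  have hITsq : Integrable (fun ω => T ω ^ 2) P := by
    have e2 : (fun ω => T ω ^ 2) = fun ω =>
        (a ^ 2 + 2 * a * b * c ^ 2 + b ^ 2 * c ^ 4) * (1:ℝ)
          + (4 * a * b * c + 4 * b ^ 2 * c ^ 3) * (X ω ^ 1)
          + (2 * a * b + 6 * b ^ 2 * c ^ 2) * (X ω ^ 2)
          + (4 * b ^ 2 * c) * (X ω ^ 3) + b ^ 2 * (X ω ^ 4)
          + 0 * 1 + 0 * 1 + 0 * 1 + 0 * 1 := by
      funext ω; simp only [hT]; ring
    rw [e2]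
    exact myIntAdd (myIntAdd (myIntAdd (myIntAdd (myIntAdd (myIntAdd (myIntAdd
      (myIntAdd (hI1.const_mul _) ((hIX 1).const_mul _)) ((hIX 2).const_mul _))
      ((hIX 3).const_mul _)) ((hIX 4).const_mul _)) (hI1.const_mul _))
      (hI1.const_mul _)) (hI1.const_mul _)) (hI1.const_mul _)
  have hIT'sq : Integrable (fun ω => T' ω ^ 2) P := by
    have e2 : (fun ω => T' ω ^ 2) = fun ω =>
        (a ^ 2 + 2 * a * b * c ^ 2 + b ^ 2 * c ^ 4) * (1:ℝ)
          + (4 * a * b * c + 4 * b ^ 2 * c ^ 3) * (Y ω ^ 1)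
          + (2 * a * b + 6 * b ^ 2 * c ^ 2) * (Y ω ^ 2)
          + (4 * b ^ 2 * c) * (Y ω ^ 3) + b ^ 2 * (Y ω ^ 4)
          + 0 * 1 + 0 * 1 + 0 * 1 + 0 * 1 := by
      funext ω; simp only [hT']; ring
    rw [e2]
    exact myIntAdd (myIntAdd (myIntAdd (myIntAdd (myIntAdd (myIntAdd (myIntAdd
      (myIntAdd (hI1.const_mul _) ((hIY 1).const_mul _)) ((hIY 2).const_mul _))
      ((hIY 3).const_mul _)) ((hIY 4).const_mul _)) (hI1.const_mul _))
      (hI1.const_mul _)) (hI1.const_mul _)) (hI1.const_mul _)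
  have hTmeas : AEStronglyMeasurable T P := by
    rw [hT]
    exact (measurable_const.add (((hX.add_const c).pow_const 2).const_mul b)).aestronglyMeasurable
  have hT'meas : AEStronglyMeasurable T' P := by
    rw [hT']
    exact (measurable_const.add (((hY.add_const c).pow_const 2).const_mul b)).aestronglyMeasurable
  have hMemT : MemLp T 2 P := (memLp_two_iff_integrable_sq hTmeas).mpr hITsq
  have hMemT' : MemLp T' 2 P := (memLp_two_iff_integrable_sq hT'meas).mpr hIT'sq
  have hVarT : variance T P = b ^ 2 * (2 + 4 * c ^ 2) := by
    rw [variance_eq_sub hMemT, eTsq, int9 P _ _ _ _ _ _ _ _ _ hI1 (hIX 1) (hIX 2)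
      (hIX 3) (hIX 4) hI1 hI1 hI1 hI1, hE1, hEX1, hEX2, hEX3, hEX4, hET]
    ring
  have hVarT' : variance T' P = b ^ 2 * (2 + 4 * c ^ 2) := by
    rw [variance_eq_sub hMemT', eT'sq, int9 P _ _ _ _ _ _ _ _ _ hI1 (hIY 1) (hIY 2)
      (hIY 3) (hIY 4) hI1 hI1 hI1 hI1, hE1, hEY1, hEY2, hEY3, hEY4, hET']
    ring
  have hETT : ∫ ω, T ω * T' ω ∂P
      = a ^ 2 + 2 * a * b * (1 + c ^ 2)
        + b ^ 2 * (1 + 2 * ρ ^ 2 + 2 * c ^ 2 + 4 * c ^ 2 * ρ + c ^ 4) := by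
    have e : (fun ω => T ω * T' ω) = fun ω =>
        (a ^ 2 + 2 * a * b * c ^ 2 + b ^ 2 * c ^ 4) * (1:ℝ)
          + (2 * a * b * c + 2 * b ^ 2 * c ^ 3) * (X ω ^ 1)
          + (a * b + b ^ 2 * c ^ 2) * (X ω ^ 2)
          + (2 * a * b * c + 2 * b ^ 2 * c ^ 3) * (Y ω ^ 1)
          + (a * b + b ^ 2 * c ^ 2) * (Y ω ^ 2)
          + (4 * b ^ 2 * c ^ 2) * (X ω ^ 1 * Y ω ^ 1)
          + (2 * b ^ 2 * c) * (X ω ^ 2 * Y ω ^ 1)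
          + (2 * b ^ 2 * c) * (X ω ^ 1 * Y ω ^ 2)
          + b ^ 2 * (X ω ^ 2 * Y ω ^ 2) := by
      funext ω; simp only [hT, hT']; ring
    rw [e, int9 P _ _ _ _ _ _ _ _ _ hI1 (hIX 1) (hIX 2) (hIY 1) (hIY 2)
      (hMon 1 1) (hMon 2 1) (hMon 1 2) (hMon 2 2), hE1, hEX1, hEX2, hEY1, hEY2,
      hM11, hM21.1, hM21.2, hM22]
    ring
  rw [hETT, hET, hET', hVarT, hVarT',
    Real.sqrt_mul_self (by positivity : (0:ℝ) ≤ b ^ 2 * (2 + 4 * c ^ 2))]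
  have hden : b ^ 2 * (2 + 4 * c ^ 2) ≠ 0 :=
    mul_ne_zero (pow_ne_zero 2 hb) (by positivity)
  have hden2 : (1:ℝ) + 2 * c ^ 2 ≠ 0 := by positivity
  field_simp
  ring
end
end
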